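/- Let l₁, l₂, l₃ be positive integers, n = lcm(l₁, l₂, l₃), and let ζ₁, ζ₂, ζ₃ ∈ ℂ be primitive l₁-th, l₂-th and l₃-th roots of unity respectively. Define η = (ζ₁+ζ₁⁻¹)² + (ζ₂+ζ₂⁻¹)² + (ζ₃+ζ₃⁻¹)² − (ζ₁+ζ₁⁻¹)(ζ₂+ζ₂⁻¹)(ζ₃+ζ₃⁻¹), an algebraic integer lying in the cyclotomic field ℚ(ζ_n). If (l₁, l₂, l₃) ≠ (4,4,4) (i.e. not all ζ_j ∈ {i,−i}), then η ≠ 0 and |N_{ℚ(ζ_n)/ℚ}(η)| ≤ 20^{φ(n)}, where φ is Euler's totient function. In particular, any prime ideal P of the ring of integers of ℚ(ζ_n) containing η has norm N(P) ≤ 20^n. -/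

import Mathlib

open Complex in
private lemma markoff_aux_real (x y z : ℝ) (hz : z ^ 2 ≤ 4)
    (h : x ^ 2 + y ^ 2 + z ^ 2 - x * y * z = 0) : x = 0 ∧ y = 0 ∧ z = 0 := by
  have hz0 : z = 0 := by
    nlinarith [sq_nonneg (2 * x - y * z), mul_nonneg (sq_nonneg y) (by linarith : (0:ℝ) ≤ 4 - z ^ 2), sq_nonneg z]
  subst hz0
  have hy0 : y = 0 := by nlinarith [sq_nonneg x, sq_nonneg y]
  have hx0 : x = 0 := by nlinarith [sq_nonneg x]
  exact ⟨hx0, hy0, rfl⟩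

open Complex in
private lemma markoff_aux_emb {L : Type} [Field L] [Algebra ℚ L] (σ : L →ₐ[ℚ] ℂ)
    (ζ : L) (l : ℕ) (hl : 0 < l) (h : IsPrimitiveRoot ζ l) :
    ∃ r : ℝ, |r| ≤ 2 ∧ σ (ζ + ζ⁻¹) = (r : ℂ) ∧ (r = 0 → l = 4) := by
  have hσ : IsPrimitiveRoot (σ ζ) l := h.map_of_injective σ.injective
  set a : ℂ := σ ζ with ha
  have hpow : a ^ l = 1 := hσ.pow_eq_one
  have habs : ‖a‖ = 1 := Complex.norm_eq_one_of_pow_eq_one hpow hl.ne'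
  have hinv : a⁻¹ = (starRingEnd ℂ) a := Complex.inv_eq_conj habs
  refine ⟨2 * a.re, ?_, ?_, ?_⟩
  · have h1 : |a.re| ≤ ‖a‖ := Complex.abs_re_le_norm a
    have h2 : ‖a‖ = 1 := habs
    rw [h2] at h1
    rw [abs_mul, _root_.abs_two]
    linarith
  · rw [map_add, map_inv₀, ← ha, hinv, Complex.add_conj]
  · intro hr
    have hre : a.re = 0 := by linarith [hr]
    have hsum : a + (starRingEnd ℂ) a = 0 := by
      rw [Complex.add_conj, hre]; simp
    have hmul : a * (starRingEnd ℂ) a = 1 := by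
      rw [Complex.mul_conj]
      rw [Complex.normSq_eq_norm_sq]
      have : ‖a‖ = 1 := habs
      rw [this]; norm_num
    have hconj : (starRingEnd ℂ) a = -a := by linear_combination hsum
    have ha2 : a ^ 2 = -1 := by
      have : a * (-a) = 1 := by rw [← hconj]; exact hmul
      linear_combination -this
    have ha4 : a ^ 4 = 1 := by
      have : a ^ 4 = (a ^ 2) ^ 2 := by ring
      rw [this, ha2]; norm_num
    have hdvd : l ∣ 4 := hσ.dvd_of_pow_eq_one 4 ha4
    have hndvd : ¬ l ∣ 2 := by
      intro hd
      have : a ^ 2 = 1 := by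
        obtain ⟨c, hc⟩ := hd
        calc a ^ 2 = (a ^ l) ^ c := by rw [← pow_mul, ← hc]
        _ = 1 := by rw [hpow]; simp
      rw [ha2] at this
      norm_num at this
    have hle : l ≤ 4 := Nat.le_of_dvd (by norm_num) hdvd
    interval_cases l <;> revert hdvd hndvd <;> decide

theorem markoff_eta_norm_bound (l₁ l₂ l₃ : ℕ) (hl₁ : 0 < l₁) (hl₂ : 0 < l₂) (hl₃ : 0 < l₃)
    (n : ℕ+) (hn : (n : ℕ) = Nat.lcm (Nat.lcm l₁ l₂) l₃)
    (L : Type) [Field L] [Algebra ℚ L] [IsCyclotomicExtension {(n : ℕ)} ℚ L] [NumberField L]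
    (ζ₁ ζ₂ ζ₃ : L) (h1 : IsPrimitiveRoot ζ₁ l₁) (h2 : IsPrimitiveRoot ζ₂ l₂)
    (h3 : IsPrimitiveRoot ζ₃ l₃)
    (η : L)
    (hη : η = (ζ₁ + ζ₁⁻¹) ^ 2 + (ζ₂ + ζ₂⁻¹) ^ 2 + (ζ₃ + ζ₃⁻¹) ^ 2 -
      (ζ₁ + ζ₁⁻¹) * (ζ₂ + ζ₂⁻¹) * (ζ₃ + ζ₃⁻¹))
    (hne : (l₁, l₂, l₃) ≠ (4, 4, 4)) :
    η ≠ 0 ∧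
    |Algebra.norm ℚ η| ≤ (20 : ℚ) ^ Nat.totient n ∧
    ∀ η' : NumberField.RingOfIntegers L, (η' : L) = η →
      ∀ P : Ideal (NumberField.RingOfIntegers L), P.IsPrime → η' ∈ P →
        Ideal.absNorm P ≤ 20 ^ (n : ℕ) := by
  classical
  -- per-embedding description of σ η
  have emb : ∀ σ : L →ₐ[ℚ] ℂ, ∃ r₁ r₂ r₃ : ℝ, |r₁| ≤ 2 ∧ |r₂| ≤ 2 ∧ |r₃| ≤ 2 ∧
      σ η = ((r₁ ^ 2 + r₂ ^ 2 + r₃ ^ 2 - r₁ * r₂ * r₃ : ℝ) : ℂ) ∧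
      (r₁ = 0 → l₁ = 4) ∧ (r₂ = 0 → l₂ = 4) ∧ (r₃ = 0 → l₃ = 4) := by
    intro σ
    obtain ⟨r₁, hr₁, he₁, hz₁⟩ := markoff_aux_emb σ ζ₁ l₁ hl₁ h1
    obtain ⟨r₂, hr₂, he₂, hz₂⟩ := markoff_aux_emb σ ζ₂ l₂ hl₂ h2
    obtain ⟨r₃, hr₃, he₃, hz₃⟩ := markoff_aux_emb σ ζ₃ l₃ hl₃ h3
    refine ⟨r₁, r₂, r₃, hr₁, hr₂, hr₃, ?_, hz₁, hz₂, hz₃⟩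
    rw [hη]
    push_cast
    rw [map_sub, map_add, map_add, map_pow, map_pow, map_pow, map_mul, map_mul,
      he₁, he₂, he₃]
  have hcard : Fintype.card (L →ₐ[ℚ] ℂ) = Nat.totient n := by
    rw [AlgHom.card ℚ L ℂ, IsCyclotomicExtension.finrank L (Polynomial.cyclotomic.irreducible_rat n.pos)]
  have hnonempty : Nonempty (L →ₐ[ℚ] ℂ) := by
    rw [← Fintype.card_pos_iff, hcard]
    exact Nat.totient_pos.2 n.pos
  -- η ≠ 0
  have hη0 : η ≠ 0 := by
    intro h0
    obtain ⟨σ⟩ := hnonempty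
    obtain ⟨r₁, r₂, r₃, hr₁, hr₂, hr₃, heq, hz₁, hz₂, hz₃⟩ := emb σ
    rw [h0, map_zero] at heq
    have hreal : r₁ ^ 2 + r₂ ^ 2 + r₃ ^ 2 - r₁ * r₂ * r₃ = 0 := by
      exact_mod_cast heq.symm
    have h3sq : r₃ ^ 2 ≤ 4 := by
      have := abs_le.mp hr₃
      nlinarith [this.1, this.2]
    obtain ⟨e₁, e₂, e₃⟩ := markoff_aux_real r₁ r₂ r₃ h3sq hreal
    exact hne (by rw [hz₁ e₁, hz₂ e₂, hz₃ e₃])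
  -- bound on each |σ η|
  have hbound : ∀ σ : L →ₐ[ℚ] ℂ, ‖σ η‖ ≤ 20 := by
    intro σ
    obtain ⟨r₁, r₂, r₃, hr₁, hr₂, hr₃, heq, -, -, -⟩ := emb σ
    rw [heq, Complex.norm_real, Real.norm_eq_abs]
    obtain ⟨a₁, b₁⟩ := abs_le.mp hr₁
    obtain ⟨a₂, b₂⟩ := abs_le.mp hr₂
    obtain ⟨a₃, b₃⟩ := abs_le.mp hr₃
    have habs : |r₁ * r₂ * r₃| ≤ 8 := by
      rw [abs_mul, abs_mul]
      calc |r₁| * |r₂| * |r₃| ≤ 2 * 2 * 2 := by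
            gcongr <;> positivity
        _ = 8 := by norm_num
    obtain ⟨c₁, c₂⟩ := abs_le.mp habs
    rw [abs_le]
    constructor <;> nlinarith
  -- the norm bound over ℚ
  have hnormQ : |Algebra.norm ℚ η| ≤ (20 : ℚ) ^ Nat.totient n := by
    have he := Algebra.norm_eq_prod_embeddings (K := ℚ) (E := ℂ) η
    have habs : ‖(algebraMap ℚ ℂ) (Algebra.norm ℚ η)‖ ≤ 20 ^ Nat.totient n := by
      rw [he]
      calc ‖∏ σ : L →ₐ[ℚ] ℂ, σ η‖ = ∏ σ : L →ₐ[ℚ] ℂ, ‖σ η‖ :=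
            norm_prod _ _
        _ ≤ ∏ _σ : L →ₐ[ℚ] ℂ, (20 : ℝ) :=
            Finset.prod_le_prod (fun _ _ => norm_nonneg _) (fun σ _ => hbound σ)
        _ = (20 : ℝ) ^ Fintype.card (L →ₐ[ℚ] ℂ) := by
            rw [Finset.prod_const, Finset.card_univ]
        _ = (20 : ℝ) ^ Nat.totient n := by rw [hcard]
    have hmap : (algebraMap ℚ ℂ) (Algebra.norm ℚ η) = ((Algebra.norm ℚ η : ℚ) : ℂ) :=
      eq_ratCast _ _
    rw [hmap] at habs
    have : |((Algebra.norm ℚ η : ℚ) : ℝ)| ≤ (20 : ℝ) ^ Nat.totient n := by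
      rwa [show ((Algebra.norm ℚ η : ℚ) : ℂ) = (((Algebra.norm ℚ η : ℚ) : ℝ) : ℂ) by push_cast; ring,
        Complex.norm_real, Real.norm_eq_abs] at habs
    exact_mod_cast this
  refine ⟨hη0, hnormQ, ?_⟩
  intro η' hη' P hP hPmem
  have hη'0 : η' ≠ 0 := by
    intro h0
    apply hη0
    rw [← hη', h0]; simp
  have hspan : Ideal.span {η'} ≤ P := (Ideal.span_singleton_le_iff_mem P).mpr hPmem
  have hdvd : Ideal.absNorm P ∣ Ideal.absNorm (Ideal.span {η'}) :=
    Ideal.absNorm_dvd_absNorm_of_le hspan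
  have hspan_ne : Ideal.absNorm (Ideal.span {η'}) ≠ 0 := by
    rw [Ne, Ideal.absNorm_eq_zero_iff, Ideal.span_singleton_eq_bot]
    exact hη'0
  have hle : Ideal.absNorm P ≤ Ideal.absNorm (Ideal.span {η'}) :=
    Nat.le_of_dvd (Nat.pos_of_ne_zero hspan_ne) hdvd
  have hnormint : ((Algebra.norm ℤ η' : ℤ) : ℚ) = Algebra.norm ℚ η := by
    rw [Algebra.coe_norm_int, hη']
    congr!
    exact Subsingleton.elim _ _

  have hnatAbs : Ideal.absNorm (Ideal.span {η'}) = (Algebra.norm ℤ η').natAbs :=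
    Ideal.absNorm_span_singleton η'
  have hbound2 : (Algebra.norm ℤ η').natAbs ≤ 20 ^ Nat.totient n := by
    have h2 : |(Algebra.norm ℤ η' : ℤ)| ≤ (20 : ℤ) ^ Nat.totient n := by
      have : |((Algebra.norm ℤ η' : ℤ) : ℚ)| ≤ (20 : ℚ) ^ Nat.totient n := by
        rw [hnormint]; exact hnormQ
      exact_mod_cast this
    rw [Int.abs_eq_natAbs] at h2
    exact_mod_cast h2
  calc Ideal.absNorm P ≤ (Algebra.norm ℤ η').natAbs := hnatAbs ▸ hle
    _ ≤ 20 ^ Nat.totient n := hbound2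
    _ ≤ 20 ^ (n : ℕ) := Nat.pow_le_pow_right (by norm_num) (Nat.totient_le n)
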